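/- Define x1 = ηα(δ + v_s + b), x2 = λ_o(δ + b)(λ + b) + λ_o v_s(δq + b) + ηω_o(δ + v_s + b) − ηα(b + δ − v_i), x3 = λ_o δ p v_i + ηω_o(b + δ − v_i), and h_a = (−x2 + √(x2² + 4x1x3))/(2x1). Then 0 < h_a < (b + δ − v_i)/(δ + v_s + b), i.e. the feasibility condition for the disease-free steady state is always satisfied. -/
import Mathlib


set_option maxHeartbeats 2000000 in
/-- Feasibility of the aware-susceptible fraction at the disease-free steady
state of model (2): `0 < h_a < (b + δ - v_i)/(δ + v_s + b)` always holds. -/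
theorem disease_free_ha_feasible
    (b eta lam lamo alpha omegao delta vs p q vi : ℝ)
    (hb : 0 < b) (heta : 0 < eta) (hlam : 0 < lam) (hlamo : 0 < lamo)
    (halpha : 0 < alpha) (homegao : 0 < omegao) (hdelta : 0 < delta)
    (hvs : 0 < vs)
    (hp0 : 0 ≤ p) (hp1 : p ≤ 1) (hq : q = 1 - p)
    (hvi0 : 0 < vi) (hvib : vi < b)
    (x1 x2 x3 ha : ℝ)
    (hx1 : x1 = eta * alpha * (delta + vs + b))
    (hx2 : x2 = lamo * (delta + b) * (lam + b) + lamo * vs * (delta * q + b)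
      + eta * omegao * (delta + vs + b) - eta * alpha * (b + delta - vi))
    (hx3 : x3 = lamo * delta * p * vi + eta * omegao * (b + delta - vi))
    (hha : ha = (-x2 + Real.sqrt (x2 ^ 2 + 4 * x1 * x3)) / (2 * x1)) :
    0 < ha ∧ ha < (b + delta - vi) / (delta + vs + b) := by
  have hD : 0 < delta + vs + b := by linarith
  have hKpos : 0 < b + delta - vi := by linarith
  have hx1pos : 0 < x1 := by rw [hx1]; positivity
  have hx3pos : 0 < x3 := by
    rw [hx3]
    have h1 : 0 ≤ lamo * delta * p * vi := by positivity
    nlinarith [mul_pos (mul_pos heta homegao) hKpos]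
  -- key positivity of the quadratic at the upper bound (cleared of denominators)
  have h1 : delta * p * vi < (lam + b) * (b + delta - vi) := by
    nlinarith [mul_le_mul_of_nonneg_right hp1 (mul_pos hdelta hvi0).le,
      mul_pos hdelta (sub_pos.mpr hvib), mul_pos hb (sub_pos.mpr hvib),
      mul_pos hlam hKpos]
  have h2 : delta * p < b + delta - vi := by
    nlinarith [mul_le_mul_of_nonneg_left hp1 hdelta.le]
  have hPid : x1 * (b + delta - vi) ^ 2 + x2 * (b + delta - vi) * (delta + vs + b)
      - x3 * (delta + vs + b) ^ 2
      = (delta + vs + b) * (lamo * ((delta + b) * ((lam + b) * (b + delta - vi)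
        - delta * p * vi) + vs * (delta + b) * ((b + delta - vi) - delta * p))) := by
    rw [hx1, hx2, hx3, hq]; ring
  have hP : 0 < x1 * (b + delta - vi) ^ 2 + x2 * (b + delta - vi) * (delta + vs + b)
      - x3 * (delta + vs + b) ^ 2 := by
    rw [hPid]
    apply mul_pos hD
    apply mul_pos hlamo
    have hdb : (0:ℝ) < delta + b := by linarith
    linarith [mul_pos hdb (sub_pos.mpr h1), mul_pos (mul_pos hvs hdb) (sub_pos.mpr h2)]
  have hNid : 2 * x1 * (b + delta - vi) + x2 * (delta + vs + b)
      = (delta + vs + b) * (lamo * (delta + b) * (lam + b)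
        + lamo * vs * (delta * (1 - p) + b) + eta * omegao * (delta + vs + b)
        + eta * alpha * (b + delta - vi)) := by
    rw [hx1, hx2, hq]; ring
  have hN : 0 < 2 * x1 * (b + delta - vi) + x2 * (delta + vs + b) := by
    rw [hNid]
    apply mul_pos hD
    have h1p : 0 ≤ delta * (1 - p) + b := by
      have := mul_nonneg hdelta.le (by linarith : (0:ℝ) ≤ 1 - p); linarith
    linarith [mul_pos (mul_pos hlamo (by linarith : (0:ℝ) < delta + b))
        (by linarith : (0:ℝ) < lam + b),
      mul_nonneg (mul_nonneg hlamo.le hvs.le) h1p,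
      mul_pos (mul_pos heta homegao) hD,
      mul_pos (mul_pos heta halpha) hKpos]
  set s := Real.sqrt (x2 ^ 2 + 4 * x1 * x3) with hs
  have hsnn : 0 ≤ s := Real.sqrt_nonneg _
  have hs2 : s ^ 2 = x2 ^ 2 + 4 * x1 * x3 := Real.sq_sqrt (by positivity)
  have hnum : 0 < -x2 + s := by
    nlinarith [mul_pos hx1pos hx3pos, hs2, hsnn]
  constructor
  · rw [hha]
    exact div_pos hnum (by linarith)
  · rw [hha, div_lt_div_iff₀ (by linarith : (0:ℝ) < 2 * x1) hD]
    have hsD2 : (s * (delta + vs + b)) ^ 2 = (x2 ^ 2 + 4 * x1 * x3) * (delta + vs + b) ^ 2 := by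
      rw [mul_pow, hs2]
    have key : (s * (delta + vs + b)) ^ 2
        < (2 * x1 * (b + delta - vi) + x2 * (delta + vs + b)) ^ 2 := by
      rw [hsD2]
      linarith [mul_pos hx1pos hP]
    have hsD : s * (delta + vs + b) < 2 * x1 * (b + delta - vi) + x2 * (delta + vs + b) := by
      nlinarith [key, hN, mul_nonneg hsnn hD.le]
    linarith [hsD]
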